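/- arXiv:1904.11665 — 4 statements merged into one kernel-verified Lean document; each statement's English description precedes it below -/
import Mathlib

section
/- If μ is a compactly supported probability measure on [0,∞) with support contained in [0, λ*], then for λ > λ*, the function φ(λ) = √λ · ∫ 1/(t − λ) dμ(t) is strictly increasing in λ. -/
open MeasureTheory

theorem stmt_3 (μ : Measure ℝ) [IsProbabilityMeasure μ] (lstar : ℝ)
    (hsupp : μ (Set.Icc 0 lstar)ᶜ = 0) :
    StrictMonoOn (fun l : ℝ => Real.sqrt l * ∫ t, (t - l)⁻¹ ∂μ) (Set.Ioi lstar) := by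
  -- lstar ≥ 0
  have hl0 : 0 ≤ lstar := by
    by_contra h
    push_neg at h
    rw [Set.Icc_eq_empty (by linarith), Set.compl_empty] at hsupp
    simp [measure_univ] at hsupp
  have hae : ∀ᵐ t ∂μ, t ∈ Set.Icc 0 lstar := by
    rw [ae_iff]
    exact hsupp
  -- integrability
  have hint : ∀ l : ℝ, lstar < l → Integrable (fun t => (t - l)⁻¹) μ := by
    intro l hl
    apply Integrable.mono' (integrable_const ((l - lstar)⁻¹))
    · exact ((measurable_id.sub_const l).inv).aestronglyMeasurable
    · filter_upwards [hae] with t ht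
      obtain ⟨ht0, htl⟩ := ht
      have h1 : t - l < 0 := by linarith
      rw [Real.norm_eq_abs, abs_inv, abs_of_neg h1, neg_sub]
      exact inv_anti₀ (by linarith) (by linarith)
  intro a ha b hb hab
  simp only [Set.mem_Ioi] at ha hb
  have ha0 : 0 < a := lt_of_le_of_lt hl0 ha
  have hb0 : 0 < b := lt_of_le_of_lt hl0 hb
  -- pointwise strict inequality a.e.
  have hkey : ∀ᵐ t ∂μ, Real.sqrt a * (t - a)⁻¹ < Real.sqrt b * (t - b)⁻¹ := by
    filter_upwards [hae] with t ht
    obtain ⟨ht0, htl⟩ := ht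
    have hA : 0 < a - t := by linarith
    have hB : 0 < b - t := by linarith
    have ht2 : t ^ 2 < a * b := by nlinarith [mul_le_mul_of_nonneg_right (le_of_lt (lt_of_le_of_lt htl ha)) ht0, mul_lt_mul_of_pos_left (lt_of_le_of_lt htl hb) ha0]
    have hsq : b * (a - t) ^ 2 < a * (b - t) ^ 2 := by nlinarith [mul_pos (sub_pos.2 hab) (sub_pos.2 ht2)]
    have h1 : Real.sqrt b * (a - t) < Real.sqrt a * (b - t) := by
      have h2 : Real.sqrt (b * (a - t) ^ 2) < Real.sqrt (a * (b - t) ^ 2) :=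
        Real.sqrt_lt_sqrt (by positivity) hsq
      rwa [Real.sqrt_mul hb0.le, Real.sqrt_mul ha0.le, Real.sqrt_sq hA.le,
        Real.sqrt_sq hB.le] at h2
    have h3 : Real.sqrt b / (b - t) < Real.sqrt a / (a - t) :=
      (div_lt_div_iff₀ hB hA).2 h1
    have e1 : (t - a)⁻¹ = -(a - t)⁻¹ := by rw [← neg_sub, inv_neg]
    have e2 : (t - b)⁻¹ = -(b - t)⁻¹ := by rw [← neg_sub, inv_neg]
    rw [e1, e2, mul_neg, mul_neg, neg_lt_neg_iff, ← div_eq_mul_inv, ← div_eq_mul_inv]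
    exact h3
  have hfa : Integrable (fun t => Real.sqrt a * (t - a)⁻¹) μ := (hint a ha).const_mul _
  have hfb : Integrable (fun t => Real.sqrt b * (t - b)⁻¹) μ := (hint b hb).const_mul _
  have hpos : 0 < ∫ t, (Real.sqrt b * (t - b)⁻¹ - Real.sqrt a * (t - a)⁻¹) ∂μ := by
    rw [integral_pos_iff_support_of_nonneg_ae]
    · have hsup : ∀ᵐ t ∂μ,
          t ∈ Function.support (fun t => Real.sqrt b * (t - b)⁻¹ - Real.sqrt a * (t - a)⁻¹) := by
        filter_upwards [hkey] with t ht
        simp only [Function.mem_support]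
        intro h
        linarith
      by_contra h
      push_neg at h
      have h0 : μ (Function.support
          (fun t => Real.sqrt b * (t - b)⁻¹ - Real.sqrt a * (t - a)⁻¹)) = 0 :=
        le_antisymm h zero_le
      have hc : μ (Function.support
          (fun t => Real.sqrt b * (t - b)⁻¹ - Real.sqrt a * (t - a)⁻¹))ᶜ = 0 := by
        exact ae_iff.mp hsup
      have : (μ Set.univ : ENNReal) ≤ 0 := by
        calc μ Set.univ ≤ μ _ + μ _ := by
              rw [← Set.union_compl_self (Function.support
                (fun t => Real.sqrt b * (t - b)⁻¹ - Real.sqrt a * (t - a)⁻¹))]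
              exact measure_union_le _ _
          _ = 0 := by rw [h0, hc, add_zero]
      simp [measure_univ] at this
    · filter_upwards [hkey] with t ht
      simp only [Pi.zero_apply]
      linarith
    · exact hfb.sub hfa
  rw [integral_sub hfb hfa] at hpos
  simp only []
  rw [← integral_const_mul, ← integral_const_mul]
  linarith
end

section
/- If μ is a compactly supported probability measure with support in [0, λ*], then for λ > λ*, the function φ(λ) = √λ · ∫ 1/(t − λ) dμ(t) is concave on (λ*, ∞). -/
open MeasureTheory

private lemma aux_concave (t lstar : ℝ) (ht0 : 0 ≤ t) (htl : t ≤ lstar) :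
    ConcaveOn ℝ (Set.Ioi lstar) (fun l : ℝ => Real.sqrt l * (t - l)⁻¹) := by
  have hint : interior (Set.Ioi lstar) = Set.Ioi lstar := (isOpen_Ioi).interior_eq
  apply concaveOn_of_hasDerivWithinAt2_nonpos (convex_Ioi lstar)
    (f' := fun l => (t - l)⁻¹ * (2 * Real.sqrt l)⁻¹ + Real.sqrt l * ((t - l) ^ 2)⁻¹)
    (f'' := fun l => (t ^ 2 - 3 * l ^ 2 - 6 * l * t) / (4 * l * Real.sqrt l * (l - t) ^ 3))
  · -- continuity
    apply ContinuousOn.mul (Real.continuous_sqrt.continuousOn)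
    apply ContinuousOn.inv₀ ((continuousOn_const.sub continuousOn_id))
    intro l hl
    have ht : t < l := lt_of_le_of_lt htl hl
    exact sub_ne_zero.mpr (ne_of_lt ht)
  · rw [hint]
    intro l hl
    have hl0 : 0 < l := lt_of_le_of_lt (le_trans ht0 htl) hl
    have htlt : t < l := lt_of_le_of_lt htl hl
    have hne : t - l ≠ 0 := by intro h; linarith [sub_eq_zero.mp h]
    have hs0 : Real.sqrt l ≠ 0 := by positivity
    have h1 : HasDerivAt Real.sqrt (1 / (2 * Real.sqrt l)) l := Real.hasDerivAt_sqrt hl0.ne'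
    have h2 : HasDerivAt (fun l : ℝ => t - l) (-1) l := (hasDerivAt_id l).const_sub t
    have h3 := h2.inv hne
    have h4 := h1.mul h3
    refine (h4.congr_deriv ?_).hasDerivWithinAt
    simp only [Pi.inv_apply, Pi.pow_apply, Pi.mul_apply]
    field_simp
  · rw [hint]
    intro l hl
    have hl0 : 0 < l := lt_of_le_of_lt (le_trans ht0 htl) hl
    obtain ⟨s, hs0, rfl⟩ : ∃ s : ℝ, 0 < s ∧ s ^ 2 = l :=
      ⟨Real.sqrt l, Real.sqrt_pos.mpr hl0, Real.sq_sqrt hl0.le⟩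
    set l := s ^ 2 with hldef
    have htlt : t < l := lt_of_le_of_lt htl hl
    have hne : t - l ≠ 0 := sub_ne_zero.mpr (ne_of_lt htlt)
    have hrs : Real.sqrt l = s := Real.sqrt_sq hs0.le
    have h1 : HasDerivAt Real.sqrt (1 / (2 * Real.sqrt l)) l := Real.hasDerivAt_sqrt hl0.ne'
    have h2 : HasDerivAt (fun l : ℝ => t - l) (-1) l := (hasDerivAt_id l).const_sub t
    have h3 := h2.inv hne
    have h5 := (h1.const_mul 2).inv (by positivity : 2 * Real.sqrt l ≠ 0)
    have h7 := h3.mul h5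
    have h8 := h2.pow 2
    have h9 := h8.inv (pow_ne_zero 2 hne)
    have h10 := h1.mul h9
    refine ((h7.add h10).congr_deriv ?_).hasDerivWithinAt
    have hlt : l - t ≠ 0 := sub_ne_zero.mpr (ne_of_gt htlt)
    rw [hrs, hldef]
    have hs0' : s ≠ 0 := hs0.ne'
    have hne' : t - s ^ 2 ≠ 0 := hne
    have hlt' : s ^ 2 - t ≠ 0 := hlt
    simp only [Pi.inv_apply, Pi.pow_apply, Pi.mul_apply, hrs, Real.sqrt_sq hs0.le]
    field_simp
    ring
  · rw [hint]
    intro l hl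
    have hl0 : 0 < l := lt_of_le_of_lt (le_trans ht0 htl) hl
    have htlt : t < l := lt_of_le_of_lt htl hl
    apply div_nonpos_of_nonpos_of_nonneg
    · nlinarith
    · exact mul_nonneg (mul_nonneg (mul_nonneg (by norm_num) hl0.le)
        (Real.sqrt_nonneg l)) (pow_pos (by linarith : (0:ℝ) < l - t) 3).le

theorem stmt_4 (μ : Measure ℝ) [IsProbabilityMeasure μ] (lstar : ℝ)
    (hsupp : μ (Set.Icc 0 lstar)ᶜ = 0) :
    ConcaveOn ℝ (Set.Ioi lstar) (fun l : ℝ => Real.sqrt l * ∫ t, (t - l)⁻¹ ∂μ) := by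
  have hae : ∀ᵐ t ∂μ, t ∈ Set.Icc 0 lstar := mem_ae_iff.2 hsupp
  have hinv : ∀ l ∈ Set.Ioi lstar, Integrable (fun t => (t - l)⁻¹) μ := by
    intro l hl
    refine Integrable.mono' (integrable_const ((l - lstar)⁻¹)) ?_ ?_
    · exact ((measurable_id.sub_const l).inv).aestronglyMeasurable
    · refine hae.mono fun t ht => ?_
      have h1 : 0 < l - t := by linarith [ht.2, Set.mem_Ioi.mp hl]
      have h2 : l - lstar ≤ l - t := by linarith [ht.2]
      have h3 : 0 < l - lstar := by linarith [Set.mem_Ioi.mp hl]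
      rw [Real.norm_eq_abs, abs_inv, abs_sub_comm, abs_of_pos h1]
      exact inv_anti₀ h3 h2
  have hig : ∀ l ∈ Set.Ioi lstar, Integrable (fun t => Real.sqrt l * (t - l)⁻¹) μ :=
    fun l hl => (hinv l hl).const_mul _
  refine ⟨convex_Ioi lstar, ?_⟩
  intro x hx y hy a b ha hb hab
  simp only [smul_eq_mul]
  have hz : a * x + b * y ∈ Set.Ioi lstar := by
    have := (convex_Ioi lstar) hx hy ha hb hab
    simpa [smul_eq_mul] using this
  have key : ∀ᵐ t ∂μ, a * (Real.sqrt x * (t - x)⁻¹) + b * (Real.sqrt y * (t - y)⁻¹) ≤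
      Real.sqrt (a * x + b * y) * (t - (a * x + b * y))⁻¹ := by
    refine hae.mono fun t ht => ?_
    have := (aux_concave t lstar ht.1 ht.2).2 hx hy ha hb hab
    simpa [smul_eq_mul] using this
  calc a * (Real.sqrt x * ∫ t, (t - x)⁻¹ ∂μ) + b * (Real.sqrt y * ∫ t, (t - y)⁻¹ ∂μ)
      = ∫ t, (a * (Real.sqrt x * (t - x)⁻¹) + b * (Real.sqrt y * (t - y)⁻¹)) ∂μ := by
        rw [integral_add ((hig x hx).const_mul a) ((hig y hy).const_mul b)]
        simp only [integral_const_mul]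
    _ ≤ ∫ t, Real.sqrt (a * x + b * y) * (t - (a * x + b * y))⁻¹ ∂μ := by
        refine integral_mono_ae ?_ (hig _ hz) key
        exact ((hig x hx).const_mul a).add ((hig y hy).const_mul b)
    _ = Real.sqrt (a * x + b * y) * ∫ t, (t - (a * x + b * y))⁻¹ ∂μ := integral_const_mul _ _
end

section
/- Fix λ > 0 and suppose G : I → ℝ satisfies G(e) < λ/a* on an interval I, with G' < 0, G'' > 0, G⁽³⁾ < 0 on I, where a* = max aᵢ. Then F_λ(e) = e − Σᵢ aᵢωᵢ/(aᵢG(e) − λ) is strictly convex on I: its second derivative G''(e)Σᵢ ωᵢ(aᵢ/(aᵢG(e)−λ))² − 2G'(e)² Σᵢ ωᵢ(aᵢ/(aᵢG(e)−λ))³ is positive. -/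
theorem stmt_12 (p : ℕ) (hp : 0 < p) (a w : Fin p → ℝ)
    (ha : ∀ i, 0 < a i) (hw : ∀ i, 0 < w i) (hsum : ∑ i, w i = 1)
    (astar : ℝ) (hastar : IsGreatest (Set.range a) astar)
    (l : ℝ) (hl : 0 < l) (I : Set ℝ) (G : ℝ → ℝ)
    (hG : ∀ e ∈ I, G e < l / astar)
    (hG' : ∀ e ∈ I, deriv G e < 0)
    (hG'' : ∀ e ∈ I, 0 < deriv (deriv G) e)
    (hG''' : ∀ e ∈ I, deriv (deriv (deriv G)) e < 0) :
    ∀ e ∈ I,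
      0 < deriv (deriv G) e * (∑ i, w i * (a i / (a i * G e - l)) ^ 2)
          - 2 * (deriv G e) ^ 2 * (∑ i, w i * (a i / (a i * G e - l)) ^ 3) := by
  intro e he
  have hpne : Nonempty (Fin p) := ⟨⟨0, hp⟩⟩
  have hastar_pos : 0 < astar := lt_of_lt_of_le (ha ⟨0, hp⟩) (hastar.2 ⟨⟨0, hp⟩, rfl⟩)
  have hden : ∀ i, a i * G e - l < 0 := by
    intro i
    have hle : a i ≤ astar := hastar.2 ⟨i, rfl⟩
    rcases le_or_gt (G e) 0 with h | h
    · nlinarith [ha i]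
    · have : astar * G e < l := by
        have := hG e he
        rw [lt_div_iff₀ hastar_pos] at this
        linarith
      nlinarith [ha i]
  have hx : ∀ i, a i / (a i * G e - l) < 0 := fun i =>
    div_neg_of_pos_of_neg (ha i) (hden i)
  have h1 : 0 < ∑ i, w i * (a i / (a i * G e - l)) ^ 2 :=
    Finset.sum_pos (fun i _ => mul_pos (hw i) (by nlinarith [hx i])) Finset.univ_nonempty
  have h2 : ∑ i, w i * (a i / (a i * G e - l)) ^ 3 < 0 :=
    Finset.sum_neg (fun i _ => mul_neg_of_pos_of_neg (hw i) (Odd.pow_neg ⟨1, rfl⟩ (hx i)))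
      Finset.univ_nonempty
  have hg2 := hG'' e he
  nlinarith [mul_pos hg2 h1, mul_nonneg (sq_nonneg (deriv G e)) (neg_nonneg.mpr h2.le)]
end

section
/- Under the same assumptions (G(e) < λ/a*, G' < 0, G'' > 0, G⁽³⁾ < 0 on I), the third derivative of F_λ(e) = e − Σᵢ aᵢωᵢ/(aᵢG(e) − λ) is negative on I; equivalently, R_λ(e) = F_λ'(e) is concave on I. -/
theorem stmt_13 (p : ℕ) (hp : 0 < p) (a w : Fin p → ℝ)
    (ha : ∀ i, 0 < a i) (hw : ∀ i, 0 < w i) (hsum : ∑ i, w i = 1)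
    (astar : ℝ) (hastar : IsGreatest (Set.range a) astar)
    (l : ℝ) (hl : 0 < l) (I : Set ℝ) (G : ℝ → ℝ)
    (hG : ∀ e ∈ I, G e < l / astar)
    (hG' : ∀ e ∈ I, deriv G e < 0)
    (hG'' : ∀ e ∈ I, 0 < deriv (deriv G) e)
    (hG''' : ∀ e ∈ I, deriv (deriv (deriv G)) e < 0) :
    ∀ e ∈ I,
      deriv (deriv (deriv G)) e * (∑ i, w i * (a i / (a i * G e - l)) ^ 2)
        - 6 * deriv (deriv G) e * deriv G e * (∑ i, w i * (a i / (a i * G e - l)) ^ 3)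
        + 6 * (deriv G e) ^ 3 * (∑ i, w i * (a i / (a i * G e - l)) ^ 4) < 0 := by
  intro e he
  have hastar_pos : 0 < astar := by
    obtain ⟨i, hi⟩ := hastar.1
    exact hi ▸ ha i
  have hr : ∀ i, a i / (a i * G e - l) < 0 := by
    intro i
    have hle : a i ≤ astar := hastar.2 ⟨i, rfl⟩
    have h1 : G e < l / a i :=
      lt_of_lt_of_le (hG e he) (div_le_div_of_nonneg_left hl.le (ha i) hle)
    have h2 : a i * G e - l < 0 := by
      have := (lt_div_iff₀ (ha i)).1 h1
      nlinarith
    exact div_neg_of_pos_of_neg (ha i) h2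
  have hne : (Finset.univ : Finset (Fin p)).Nonempty := by
    simpa [Finset.univ_nonempty_iff, Fin.pos_iff_nonempty] using hp
  have hS2 : 0 < ∑ i, w i * (a i / (a i * G e - l)) ^ 2 :=
    Finset.sum_pos (fun i _ => mul_pos (hw i)
      (Even.pow_pos (by decide) (hr i).ne)) hne
  have hS3 : ∑ i, w i * (a i / (a i * G e - l)) ^ 3 < 0 :=
    Finset.sum_neg (fun i _ => mul_neg_of_pos_of_neg (hw i)
      (Odd.pow_neg (by decide) (hr i))) hne
  have hS4 : 0 < ∑ i, w i * (a i / (a i * G e - l)) ^ 4 :=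
    Finset.sum_pos (fun i _ => mul_pos (hw i)
      (Even.pow_pos (by decide) (hr i).ne)) hne
  have hA := hG''' e he
  have hB := hG'' e he
  have hC := hG' e he
  nlinarith [mul_neg_of_neg_of_pos hA hS2,
    mul_pos_of_neg_of_neg (mul_neg_of_pos_of_neg hB hC) hS3,
    mul_neg_of_neg_of_pos (show (deriv G e) ^ 3 < 0 from Odd.pow_neg (by decide) hC) hS4]
end
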